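/- Let U ⊆ ℂ be a nonempty open preconnected set, let b, c ∈ ℝ with (b,c) ≠ (0,0), and let f, g : ℂ → ℂ be analytic on U such that g'(z) ≠ 0 for all z ∈ U, and such that g'(z)·(f'(z))² = (b+i·c)·(g'(z)·f''(z) − g''(z)·f'(z)) for all z ∈ U. Then there exist constants z₁, z₂ ∈ ℂ such that exp(−f(z)/(b+i·c)) = z₁·g(z) + z₂ for all z ∈ U. -/

import Mathlib

open Complex

/-- A function analytic on an open preconnected set with zero derivative is constant. -/
lemma aux_const_of_hasDerivAt_zero (U : Set ℂ) (hU : IsOpen U) (hUconn : IsPreconnected U)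
    {φ : ℂ → ℂ} (hφa : AnalyticOnNhd ℂ φ U) (hφ : ∀ z ∈ U, HasDerivAt φ 0 z)
    {z₀ : ℂ} (hz₀ : z₀ ∈ U) : ∀ z ∈ U, φ z = φ z₀ := by
  have h := hφa.eqOn_of_preconnected_of_eventuallyEq
    (analyticOnNhd_const (v := φ z₀)) hUconn hz₀ ?_
  · exact fun z hz => h hz
  · obtain ⟨r, hr, hball⟩ := Metric.isOpen_iff.mp hU z₀ hz₀
    filter_upwards [Metric.ball_mem_nhds z₀ hr] with z hz
    refine (convex_ball z₀ r).is_const_of_fderivWithin_eq_zero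
      (fun x hx => ((hφ x (hball hx)).differentiableAt).differentiableWithinAt)
      (fun x hx => ?_) hz (Metric.mem_ball_self hr)
    rw [fderivWithin_of_isOpen Metric.isOpen_ball hx]
    rw [(hφ x (hball hx)).hasFDerivAt.fderiv]
    ext
    simp

/-- Lemma 3.3, case a = 0, in branch-free form. -/
theorem stmt_13 (U : Set ℂ) (hU : IsOpen U) (hUne : U.Nonempty)
    (hUconn : IsPreconnected U) (b c : ℝ) (hbc : (b, c) ≠ (0, 0)) (f g : ℂ → ℂ)
    (hf : AnalyticOnNhd ℂ f U) (hg : AnalyticOnNhd ℂ g U)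
    (hg' : ∀ z ∈ U, deriv g z ≠ 0)
    (hode : ∀ z ∈ U,
      deriv g z * (deriv f z) ^ 2 =
        ((b : ℂ) + (c : ℂ) * Complex.I) *
          (deriv g z * deriv (deriv f) z - deriv (deriv g) z * deriv f z)) :
    ∃ z₁ z₂ : ℂ, ∀ z ∈ U,
      Complex.exp (-f z / ((b : ℂ) + (c : ℂ) * Complex.I)) = z₁ * g z + z₂ := by
  set lam : ℂ := (b : ℂ) + (c : ℂ) * Complex.I with hlam
  have hlam0 : lam ≠ 0 := by
    intro h
    apply hbc
    have hre : lam.re = b := by simp [hlam]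
    have him : lam.im = c := by simp [hlam]
    rw [h] at hre him
    simp at hre him
    simp [← hre, ← him]
  obtain ⟨z₀, hz₀⟩ := hUne
  set F : ℂ → ℂ := fun z => Complex.exp (-f z / lam) with hF
  -- basic analyticity facts
  have hFa : AnalyticOnNhd ℂ F U := by
    exact AnalyticOnNhd.cexp ((hf.neg).div (analyticOnNhd_const) (fun z _ => hlam0))
  have hf' : AnalyticOnNhd ℂ (deriv f) U := hf.deriv
  have hg'' : AnalyticOnNhd ℂ (deriv g) U := hg.deriv
  -- derivative facts at points of U
  have hfd : ∀ z ∈ U, HasDerivAt f (deriv f z) z := fun z hz =>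
    ((hf z hz).differentiableAt).hasDerivAt
  have hfd2 : ∀ z ∈ U, HasDerivAt (deriv f) (deriv (deriv f) z) z := fun z hz =>
    ((hf' z hz).differentiableAt).hasDerivAt
  have hgd : ∀ z ∈ U, HasDerivAt g (deriv g z) z := fun z hz =>
    ((hg z hz).differentiableAt).hasDerivAt
  have hgd2 : ∀ z ∈ U, HasDerivAt (deriv g) (deriv (deriv g) z) z := fun z hz =>
    ((hg'' z hz).differentiableAt).hasDerivAt
  have hFd : ∀ z ∈ U, HasDerivAt F (F z * (-(deriv f z) / lam)) z := by
    intro z hz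
    have h1 : HasDerivAt (fun w => -f w / lam) (-(deriv f z) / lam) z :=
      ((hfd z hz).neg).div_const lam
    exact h1.cexp
  -- the quotient φ = F * f' / g' is constant
  set φ : ℂ → ℂ := fun z => F z * deriv f z / deriv g z with hφdef
  have hφa : AnalyticOnNhd ℂ φ U := (hFa.mul hf').div hg'' hg'
  have hφd : ∀ z ∈ U, HasDerivAt φ 0 z := by
    intro z hz
    have hnum : HasDerivAt (fun w => F w * deriv f w)
        (F z * (-(deriv f z) / lam) * deriv f z + F z * deriv (deriv f) z) z :=
      (hFd z hz).mul (hfd2 z hz)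
    have h := hnum.div (hgd2 z hz) (hg' z hz)
    convert h using 1
    any_goals rfl
    have hB := hg' z hz
    have hodez := hode z hz
    rw [hlam] at hodez
    field_simp
    linear_combination (F z) * hodez
  have hφc := aux_const_of_hasDerivAt_zero U hU hUconn hφa hφd hz₀
  -- now F' = k * g' with k = φ z₀ * (-1/lam)
  set k : ℂ := -(φ z₀) / lam with hk
  set ψ : ℂ → ℂ := fun z => F z - k * g z with hψdef
  have hψa : AnalyticOnNhd ℂ ψ U := hFa.sub (analyticOnNhd_const.mul hg)
  have hψd : ∀ z ∈ U, HasDerivAt ψ 0 z := by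
    intro z hz
    have h := (hFd z hz).sub ((hgd z hz).const_mul k)
    convert h using 1
    any_goals rfl
    have hφz := hφc z hz
    have hB := hg' z hz
    rw [hφdef] at hφz
    simp only at hφz
    rw [hk]
    field_simp at hφz ⊢
    linear_combination hφz
  have hψc := aux_const_of_hasDerivAt_zero U hU hUconn hψa hψd hz₀
  refine ⟨k, ψ z₀, fun z hz => ?_⟩
  have h2 : F z - k * g z = ψ z₀ := hψc z hz
  show F z = k * g z + ψ z₀
  linear_combination h2
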